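/- Let V be a finite-dimensional real representation of SL(2,ℝ). For every v ∈ V ∖ {0} and every r ≠ 0, one has λ^max(u(r)v) ≥ −λ^max(v). -/

import Mathlib

/-!
STATEMENT 7: Let `V` be a finite-dimensional real representation of `SL(2,ℝ)`, decomposed
into eigenspaces `V_λ` of `D = diag(1,-1)` (equivalently, of the torus
`a(t) = diag(e^t, e^{-t}) = exp(tD)`), with `λ^max(v) = max{λ : v_λ ≠ 0}`.
Then for every `v ∈ V \ {0}` and `r ≠ 0`, `λ^max(u(r)v) ≥ -λ^max(v)`, where
`u(r) = [[1, r], [0, 1]]`.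
-/

noncomputable section
open Filter

def dTorus (t : ℝ) : Matrix.SpecialLinearGroup (Fin 2) ℝ :=
  ⟨!![Real.exp t, 0; 0, Real.exp (-t)], by
    rw [Matrix.det_fin_two_of]
    rw [← Real.exp_add, add_neg_cancel, Real.exp_zero]
    ring⟩

def uSL2 (r : ℝ) : Matrix.SpecialLinearGroup (Fin 2) ℝ :=
  ⟨!![1, r; 0, 1], by rw [Matrix.det_fin_two_of]; ring⟩

def lSL2 (s : ℝ) : Matrix.SpecialLinearGroup (Fin 2) ℝ :=
  ⟨!![1, 0; s, 1], by rw [Matrix.det_fin_two_of]; ring⟩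

def wSL2 (r : ℝ) (hr : r ≠ 0) : Matrix.SpecialLinearGroup (Fin 2) ℝ :=
  ⟨!![0, r; -r⁻¹, 0], by rw [Matrix.det_fin_two_of]; field_simp; norm_num⟩

lemma SL2_ext (A B : Matrix.SpecialLinearGroup (Fin 2) ℝ)
    (h : (A : Matrix (Fin 2) (Fin 2) ℝ) = B) : A = B := Subtype.ext h

lemma dTorus_mul_lSL2 (t s : ℝ) :
    dTorus t * lSL2 s = lSL2 (Real.exp (-2*t) * s) * dTorus t := by
  apply SL2_ext
  rw [Matrix.SpecialLinearGroup.coe_mul, Matrix.SpecialLinearGroup.coe_mul]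
  simp only [dTorus, lSL2]
  ext i j
  fin_cases i <;> fin_cases j <;>
    simp [Matrix.mul_apply, Fin.sum_univ_two,
      show Real.exp (-2*t) = Real.exp (-t) * Real.exp (-t) by rw [← Real.exp_add]; ring_nf,
      Real.exp_neg] <;> field_simp <;>
    rw [show (2:ℝ)*t = t + t by ring, Real.exp_add] <;> ring

lemma lSL2_mul (s s' : ℝ) : lSL2 s * lSL2 s' = lSL2 (s + s') := by
  apply SL2_ext
  rw [Matrix.SpecialLinearGroup.coe_mul]
  simp only [lSL2]
  ext i j
  fin_cases i <;> fin_cases j <;> simp [Matrix.mul_apply, Fin.sum_univ_two]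

lemma lSL2_zero : lSL2 0 = 1 := by
  apply SL2_ext
  simp only [lSL2, Matrix.SpecialLinearGroup.coe_one]
  exact Matrix.one_fin_two.symm

lemma wSL2_mul_dTorus (r : ℝ) (hr : r ≠ 0) (t : ℝ) :
    wSL2 r hr * dTorus t = dTorus (-t) * wSL2 r hr := by
  apply SL2_ext
  rw [Matrix.SpecialLinearGroup.coe_mul, Matrix.SpecialLinearGroup.coe_mul]
  simp only [dTorus, wSL2]
  ext i j
  fin_cases i <;> fin_cases j <;> simp [Matrix.mul_apply, Fin.sum_univ_two, mul_comm]

lemma uSL2_eq (r : ℝ) (hr : r ≠ 0) :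
    uSL2 r = lSL2 r⁻¹ * wSL2 r hr * lSL2 r⁻¹ := by
  apply SL2_ext
  rw [Matrix.SpecialLinearGroup.coe_mul, Matrix.SpecialLinearGroup.coe_mul]
  simp only [uSL2, lSL2, wSL2]
  ext i j
  fin_cases i <;> fin_cases j <;>
    simp [Matrix.mul_apply, Fin.sum_univ_two, hr]

lemma rpow_tendsto_zero_zero {p : ℝ} (hp : 0 < p) :
    Tendsto (fun c : ℝ => c ^ p) (nhdsWithin 0 (Set.Ioi 0)) (nhds 0) := by
  have h := (Real.continuousAt_rpow_const 0 p (Or.inr hp.le)).tendsto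
  rw [Real.zero_rpow hp.ne'] at h
  exact h.mono_left nhdsWithin_le_nhds

lemma no_power_combo (F : Finset ℝ) (b g : ℝ → ℝ) (hb : Set.InjOn b F)
    (A e : ℝ) (hA : A ≠ 0) (he : e < 0)
    (h : ∀ c : ℝ, 0 < c → A * (1+c) ^ e = ∑ κ ∈ F, g κ * c ^ (b κ)) : False := by
  classical
  set F' := F.filter (fun κ => g κ ≠ 0) with hF'
  have hF'sub : F' ⊆ F := Finset.filter_subset _ _
  have h' : ∀ c : ℝ, 0 < c → A * (1+c) ^ e = ∑ κ ∈ F', g κ * c ^ (b κ) := by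
    intro c hc
    rw [h c hc]
    symm
    apply Finset.sum_filter_of_ne
    intro κ _ hfne hg0
    exact hfne (by rw [hg0, zero_mul])
  rcases Finset.eq_empty_or_nonempty F' with hFe | hFne
  · have h1 := h' 1 one_pos
    rw [hFe, Finset.sum_empty] at h1
    have h2 : (0:ℝ) < (1+1:ℝ) ^ e := Real.rpow_pos_of_pos (by norm_num) e
    exact hA ((mul_eq_zero.mp h1).resolve_right h2.ne')
  obtain ⟨κ₁, hκ₁F, hκ₁max⟩ := F'.exists_max_image b hFne
  have hg₁ : g κ₁ ≠ 0 := (Finset.mem_filter.mp hκ₁F).2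
  have T1 : Tendsto (fun c : ℝ => A * (1+c) ^ e * c ^ (-(b κ₁))) atTop (nhds (g κ₁)) := by
    have heq : ∀ᶠ c : ℝ in atTop, (∑ κ ∈ F', g κ * c ^ (b κ - b κ₁))
        = A * (1+c) ^ e * c ^ (-(b κ₁)) := by
      filter_upwards [eventually_gt_atTop (0:ℝ)] with c hc
      rw [h' c hc, Finset.sum_mul]
      apply Finset.sum_congr rfl
      intro κ _
      rw [mul_assoc, ← Real.rpow_add hc, sub_eq_add_neg]
    have Tsum : Tendsto (fun c : ℝ => ∑ κ ∈ F', g κ * c ^ (b κ - b κ₁)) atTop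
        (nhds (∑ κ ∈ F', if κ = κ₁ then g κ₁ else 0)) := by
      apply tendsto_finset_sum
      intro κ hκ
      by_cases hk : κ = κ₁
      · subst hk
        simp only [if_pos rfl, sub_self]
        simp only [Real.rpow_zero, mul_one]
        exact tendsto_const_nhds
      · have hlt : b κ - b κ₁ < 0 := by
          have hle := hκ₁max κ hκ
          have hne : b κ ≠ b κ₁ := fun hEq => hk (hb (hF'sub hκ) (hF'sub hκ₁F) hEq)
          have := lt_of_le_of_ne hle hne; linarith
        simp only [if_neg hk]
        have h2 := tendsto_rpow_neg_atTop (y := -(b κ - b κ₁)) (by linarith)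
        rw [neg_neg] at h2
        simpa using h2.const_mul (g κ)
    rw [Finset.sum_ite_eq' F' κ₁ (fun _ => g κ₁), if_pos hκ₁F] at Tsum
    exact Tsum.congr' heq
  have hbe : b κ₁ ≤ e := by
    by_contra hbe
    push_neg at hbe
    have T0 : Tendsto (fun c : ℝ => A * (1+c) ^ e * c ^ (-(b κ₁))) atTop (nhds 0) := by
      apply squeeze_zero_norm' (a := fun c : ℝ => |A| * c ^ (e - b κ₁))
      · filter_upwards [eventually_ge_atTop (1:ℝ)] with c hc
        have hc0 : (0:ℝ) < c := by linarith
        have h1c : (0:ℝ) < 1 + c := by linarith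
        rw [Real.norm_eq_abs, abs_mul, abs_mul, abs_of_pos (Real.rpow_pos_of_pos h1c e),
          abs_of_pos (Real.rpow_pos_of_pos hc0 _)]
        have hle1 : (1+c) ^ e ≤ c ^ e := Real.rpow_le_rpow_of_nonpos hc0 (by linarith) he.le
        calc |A| * (1+c)^e * c^(-(b κ₁))
            ≤ |A| * c^e * c^(-(b κ₁)) := by
              apply mul_le_mul_of_nonneg_right
                (mul_le_mul_of_nonneg_left hle1 (abs_nonneg A)) (Real.rpow_nonneg hc0.le _)
          _ = |A| * c ^ (e - b κ₁) := by rw [mul_assoc, ← Real.rpow_add hc0, sub_eq_add_neg]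
      · have h2 := tendsto_rpow_neg_atTop (y := b κ₁ - e) (by linarith)
        rw [show -(b κ₁ - e) = e - b κ₁ by ring] at h2
        simpa using h2.const_mul |A|
    exact hg₁ (tendsto_nhds_unique T1 T0)
  obtain ⟨κ₀, hκ₀F, hκ₀min⟩ := F'.exists_min_image b hFne
  have hg₀ : g κ₀ ≠ 0 := (Finset.mem_filter.mp hκ₀F).2
  have hbκ₀ : b κ₀ < 0 := lt_of_le_of_lt (le_trans (hκ₀min κ₁ hκ₁F) hbe) he
  have T3 : Tendsto (fun c : ℝ => A * (1+c)^e * c ^ (-(b κ₀)))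
      (nhdsWithin 0 (Set.Ioi 0)) (nhds (g κ₀)) := by
    have heq : ∀ᶠ c : ℝ in nhdsWithin 0 (Set.Ioi 0), (∑ κ ∈ F', g κ * c ^ (b κ - b κ₀))
        = A * (1+c) ^ e * c ^ (-(b κ₀)) := by
      filter_upwards [self_mem_nhdsWithin] with c hc
      have hc0 : (0:ℝ) < c := hc
      rw [h' c hc0, Finset.sum_mul]
      apply Finset.sum_congr rfl
      intro κ _
      rw [mul_assoc, ← Real.rpow_add hc0, sub_eq_add_neg]
    have Tsum : Tendsto (fun c : ℝ => ∑ κ ∈ F', g κ * c ^ (b κ - b κ₀))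
        (nhdsWithin 0 (Set.Ioi 0)) (nhds (∑ κ ∈ F', if κ = κ₀ then g κ₀ else 0)) := by
      apply tendsto_finset_sum
      intro κ hκ
      by_cases hk : κ = κ₀
      · subst hk
        simp only [if_pos rfl, sub_self, Real.rpow_zero, mul_one]
        exact tendsto_const_nhds
      · have hlt : 0 < b κ - b κ₀ := by
          have hle := hκ₀min κ hκ
          have hne : b κ ≠ b κ₀ := fun hEq => hk (hb (hF'sub hκ) (hF'sub hκ₀F) hEq)
          have := lt_of_le_of_ne hle (Ne.symm hne); linarith
        simp only [if_neg hk]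
        simpa using (rpow_tendsto_zero_zero hlt).const_mul (g κ)
    rw [Finset.sum_ite_eq' F' κ₀ (fun _ => g κ₀), if_pos hκ₀F] at Tsum
    exact Tsum.congr' heq
  have T4 : Tendsto (fun c : ℝ => A * (1+c)^e * c ^ (-(b κ₀)))
      (nhdsWithin 0 (Set.Ioi 0)) (nhds 0) := by
    have hca : ContinuousAt (fun c : ℝ => A * (1+c)^e) 0 := by
      apply ContinuousAt.mul continuousAt_const
      have h1 : ContinuousAt (fun x : ℝ => x ^ e) ((fun c : ℝ => 1 + c) 0) := by
        simpa using Real.continuousAt_rpow_const 1 e (Or.inl one_ne_zero)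
      exact h1.comp (continuousAt_const.add continuousAt_id)
    have hcont : Tendsto (fun c : ℝ => A * (1+c)^e) (nhdsWithin 0 (Set.Ioi 0)) (nhds (A * 1)) := by
      have := hca.tendsto.mono_left (nhdsWithin_le_nhds (s := Set.Ioi (0:ℝ)))
      simpa using this
    have hz := rpow_tendsto_zero_zero (p := -(b κ₀)) (by linarith)
    have := hcont.mul hz
    simpa using this
  exact hg₀ (tendsto_nhds_unique T3 T4)

section Rep

variable {V : Type} [AddCommGroup V] [Module ℝ V] [FiniteDimensional ℝ V]
variable (ρ : Matrix.SpecialLinearGroup (Fin 2) ℝ →* (V →ₗ[ℝ] V)) (cp : V → ℝ → V)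

/-- Uniqueness of the eigenspace decomposition. -/
lemma cp_unique
    (hcp_mem : ∀ (v : V) (lam t : ℝ),
      ρ (dTorus t) (cp v lam) = Real.exp (lam * t) • cp v lam)
    (hcp_fin : ∀ v : V, (Function.support (cp v)).Finite)
    (hcp_sum : ∀ v : V, (∑ᶠ lam, cp v lam) = v)
    (v : V) (x : ℝ → V) (hsum : ∑ᶠ κ, x κ = v)
    (hxfin : (Function.support x).Finite)
    (hxmem : ∀ (lam t : ℝ), ρ (dTorus t) (x lam) = Real.exp (lam * t) • x lam)
    (lam : ℝ) : cp v lam = x lam := by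
  set d : ℝ → V := fun κ => cp v κ - x κ with hd
  have hdfin : (Function.support d).Finite := by
    apply Set.Finite.subset ((hcp_fin v).union hxfin)
    intro κ hκ
    by_contra hc
    simp only [Set.mem_union, Function.mem_support, not_or, not_not] at hc
    apply hκ
    simp [hd, hc.1, hc.2]
  have hdsum : ∑ᶠ κ, d κ = 0 := by
    rw [finsum_sub_distrib (hcp_fin v) hxfin, hcp_sum v, hsum, sub_self]
  have key : ∀ κ, d κ = 0 := by
    by_contra hc
    push_neg at hc
    obtain ⟨κ₀, hκ₀⟩ := hc
    set T : Module.End ℝ V := ρ (dTorus 1) with hT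
    have heig : ∀ κ ∈ hdfin.toFinset, T.HasEigenvector (Real.exp κ) (d κ) := by
      intro κ hκ
      rw [Set.Finite.mem_toFinset] at hκ
      refine ⟨?_, hκ⟩
      rw [Module.End.mem_eigenspace_iff]
      have : ρ (dTorus 1) (d κ) = Real.exp (κ * 1) • d κ := by
        simp only [hd, map_sub, hcp_mem, hxmem, smul_sub]
      simpa using this
    have hli := Module.End.eigenvectors_linearIndependent' T
      (fun κ : hdfin.toFinset => Real.exp ((κ : ℝ)))
      (fun a b hab => Subtype.ext (Real.exp_eq_exp.mp hab))
      (fun κ => d κ) (fun κ => heig κ κ.2)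
    have hsum0 : ∑ κ : hdfin.toFinset, (1:ℝ) • d (κ : ℝ) = 0 := by
      simp only [one_smul]
      rw [Finset.sum_coe_sort hdfin.toFinset (fun κ => d κ)]
      rw [← finsum_eq_sum d hdfin]
      exact hdsum
    have := Fintype.linearIndependent_iff.mp hli (fun _ => (1:ℝ)) hsum0
      ⟨κ₀, hdfin.mem_toFinset.mpr hκ₀⟩
    norm_num at this
  have := key lam
  simp only [hd, sub_eq_zero] at this
  exact this


variable (hcp_mem : ∀ (v : V) (lam t : ℝ),
      ρ (dTorus t) (cp v lam) = Real.exp (lam * t) • cp v lam)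
  (hcp_fin : ∀ v : V, (Function.support (cp v)).Finite)
  (hcp_sum : ∀ v : V, (∑ᶠ lam, cp v lam) = v)

lemma lmap_finsum {W W' : Type} [AddCommGroup W] [Module ℝ W] [AddCommGroup W'] [Module ℝ W']
    {ι : Type} (g : W →ₗ[ℝ] W') (f : ι → W) (hf : (Function.support f).Finite) :
    g (∑ᶠ i, f i) = ∑ᶠ i, g (f i) :=
  g.toAddMonoidHom.map_finsum hf

include hcp_mem hcp_fin hcp_sum

lemma cp_zero (lam : ℝ) : cp 0 lam = 0 := by
  have := cp_unique ρ cp hcp_mem hcp_fin hcp_sum 0 (fun _ => 0) (by simp) (by simp)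
    (by intro κ t; simp) lam
  simpa using this

lemma cp_add (a b : V) (lam : ℝ) : cp (a + b) lam = cp a lam + cp b lam := by
  refine cp_unique ρ cp hcp_mem hcp_fin hcp_sum _ (fun κ => cp a κ + cp b κ) ?_ ?_ ?_ lam
  · rw [finsum_add_distrib (hcp_fin a) (hcp_fin b), hcp_sum, hcp_sum]
  · exact Set.Finite.subset ((hcp_fin a).union (hcp_fin b)) (Function.support_add _ _)
  · intro κ t; rw [map_add, hcp_mem, hcp_mem, smul_add]

lemma cp_smul (c : ℝ) (a : V) (lam : ℝ) : cp (c • a) lam = c • cp a lam := by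
  refine cp_unique ρ cp hcp_mem hcp_fin hcp_sum _ (fun κ => c • cp a κ) ?_ ?_ ?_ lam
  · rw [← smul_finsum' c (hcp_fin a), hcp_sum]
  · apply Set.Finite.subset (hcp_fin a)
    intro κ hκ
    simp only [Function.mem_support] at hκ ⊢
    intro h0; apply hκ; rw [h0, smul_zero]
  · intro κ t; rw [map_smul, hcp_mem, smul_comm]

lemma cp_sum {ι : Type} (s : Finset ι) (f : ι → V) (lam : ℝ) :
    cp (∑ i ∈ s, f i) lam = ∑ i ∈ s, cp (f i) lam := by
  classical
  induction s using Finset.induction with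
  | empty => simp [cp_zero ρ cp hcp_mem hcp_fin hcp_sum]
  | @insert a s hnotmem ih =>
      rw [Finset.sum_insert hnotmem, Finset.sum_insert hnotmem,
        cp_add ρ cp hcp_mem hcp_fin hcp_sum, ih]

lemma cp_finsum {ι : Type} (f : ι → V) (hf : (Function.support f).Finite) (lam : ℝ) :
    cp (∑ᶠ i, f i) lam = ∑ᶠ i, cp (f i) lam := by
  have hsub : Function.support (fun i => cp (f i) lam) ⊆ (hf.toFinset : Set ι) := by
    intro i hi
    rw [Set.Finite.coe_toFinset]
    intro h0
    apply hi
    simp only [Function.mem_support, not_not] at h0 ⊢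
    rw [h0, cp_zero ρ cp hcp_mem hcp_fin hcp_sum]
  rw [finsum_eq_sum f hf, cp_sum ρ cp hcp_mem hcp_fin hcp_sum,
    finsum_eq_finset_sum_of_support_subset _ hsub]

lemma cp_torus (x : V) (t lam : ℝ) :
    cp (ρ (dTorus t) x) lam = Real.exp (lam * t) • cp x lam := by
  refine cp_unique ρ cp hcp_mem hcp_fin hcp_sum _
    (fun κ => Real.exp (κ * t) • cp x κ) ?_ ?_ ?_ lam
  · have h1 : (∑ᶠ κ, Real.exp (κ*t) • cp x κ) = ∑ᶠ κ, ρ (dTorus t) (cp x κ) :=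
      finsum_congr fun κ => (hcp_mem x κ t).symm
    rw [h1, ← lmap_finsum (ρ (dTorus t)) _ (hcp_fin x), hcp_sum]
  · apply Set.Finite.subset (hcp_fin x)
    intro κ hκ
    simp only [Function.mem_support] at hκ ⊢
    intro h0; apply hκ; rw [h0, smul_zero]
  · intro κ t'
    rw [map_smul, hcp_mem, smul_comm]

lemma cp_w (r : ℝ) (hr : r ≠ 0) (x : V) (lam : ℝ) :
    cp (ρ (wSL2 r hr) x) lam = ρ (wSL2 r hr) (cp x (-lam)) := by
  refine cp_unique ρ cp hcp_mem hcp_fin hcp_sum _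
    (fun κ => ρ (wSL2 r hr) (cp x (-κ))) ?_ ?_ ?_ lam
  · calc (∑ᶠ κ, ρ (wSL2 r hr) (cp x (-κ)))
        = ∑ᶠ κ, ρ (wSL2 r hr) (cp x κ) :=
          finsum_comp_equiv (Equiv.neg ℝ) (f := fun κ => ρ (wSL2 r hr) (cp x κ))
      _ = ρ (wSL2 r hr) x := by rw [← lmap_finsum (ρ (wSL2 r hr)) _ (hcp_fin x), hcp_sum]
  · apply Set.Finite.subset ((hcp_fin x).preimage (neg_injective.injOn))
    intro κ hκ
    simp only [Function.mem_support] at hκ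
    simp only [Set.mem_preimage, Function.mem_support]
    intro h0; apply hκ; rw [h0, map_zero]
  · intro κ t
    have hcomm : dTorus t * wSL2 r hr = wSL2 r hr * dTorus (-t) := by
      have := wSL2_mul_dTorus r hr (-t); rw [neg_neg] at this; exact this.symm
    rw [← Module.End.mul_apply, ← map_mul, hcomm, map_mul, Module.End.mul_apply, hcp_mem, map_smul,
      show (-κ) * (-t) = κ * t by ring]

lemma cp_eigen (y : V) (lam : ℝ) (hy : ∀ t, ρ (dTorus t) y = Real.exp (lam * t) • y) (κ : ℝ) :
    cp y κ = if κ = lam then y else 0 := by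
  refine cp_unique ρ cp hcp_mem hcp_fin hcp_sum y (fun κ => if κ = lam then y else 0) ?_ ?_ ?_ κ
  · rw [finsum_eq_single _ lam (by intro κ' h; simp [h])]
    simp
  · apply Set.Finite.subset (Set.finite_singleton lam)
    intro κ' hκ'
    simp only [Function.mem_support] at hκ'
    by_contra h
    simp only [Set.mem_singleton_iff] at h
    exact hκ' (by simp [h])
  · intro κ' t
    by_cases h : κ' = lam
    · subst h; simp only [if_pos rfl]; exact hy t
    · simp [h]


lemma cp_l_scale (y : V) (lam : ℝ) (hy : ∀ t, ρ (dTorus t) y = Real.exp (lam * t) • y)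
    (s σ μ : ℝ) (hσ : 0 < σ) :
    cp (ρ (lSL2 (σ * s)) y) μ = (σ ^ ((lam - μ)/2)) • cp (ρ (lSL2 s) y) μ := by
  set t := -(Real.log σ)/2 with ht
  have hst : Real.exp (-2*t) = σ := by
    rw [ht, show -2 * (-(Real.log σ)/2) = Real.log σ by ring]
    exact Real.exp_log hσ
  have key : ρ (dTorus t) (ρ (lSL2 s) y) = Real.exp (lam * t) • ρ (lSL2 (σ * s)) y := by
    rw [← Module.End.mul_apply, ← map_mul, dTorus_mul_lSL2, hst, map_mul, Module.End.mul_apply,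
      hy t, map_smul]
  have h1 : Real.exp (μ * t) • cp (ρ (lSL2 s) y) μ
      = Real.exp (lam * t) • cp (ρ (lSL2 (σ*s)) y) μ := by
    rw [← cp_torus ρ cp hcp_mem hcp_fin hcp_sum, key, cp_smul ρ cp hcp_mem hcp_fin hcp_sum]
  have h2 : cp (ρ (lSL2 (σ*s)) y) μ = Real.exp ((μ - lam) * t) • cp (ρ (lSL2 s) y) μ := by
    have h3 := congrArg (fun z => Real.exp (-(lam * t)) • z) h1
    simp only [smul_smul, ← Real.exp_add] at h3
    rw [show -(lam*t) + lam*t = 0 by ring, Real.exp_zero, one_smul] at h3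
    rw [← h3, show -(lam*t) + μ*t = (μ - lam)*t by ring]
  rw [h2]
  congr 1
  rw [Real.rpow_def_of_pos hσ]
  congr 1
  rw [ht]; ring

lemma cp_l_eigen_eq_zero (y : V) (lam : ℝ) (hy : ∀ t, ρ (dTorus t) y = Real.exp (lam * t) • y)
    (s μ : ℝ) (hlt : lam < μ) : cp (ρ (lSL2 s) y) μ = 0 := by
  by_contra hC
  set C : ℝ → V := fun κ => cp (ρ (lSL2 s) y) κ with hCdef
  have hCfin : (Function.support C).Finite := hcp_fin _
  set D : ℝ → V := fun κ => cp (ρ (lSL2 s) (C κ)) μ with hDdef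
  have hD0 : ∀ κ, C κ = 0 → D κ = 0 := by
    intro κ h0
    rw [hDdef]
    simp only
    rw [h0, map_zero, cp_zero ρ cp hcp_mem hcp_fin hcp_sum]
  have hDsub : Function.support D ⊆ Function.support C := by
    intro κ hκ
    simp only [Function.mem_support] at hκ ⊢
    intro h0; exact hκ (hD0 κ h0)
  have key : ∀ c : ℝ, 0 < c →
      (((1+c) : ℝ) ^ ((lam-μ)/2)) • C μ = ∑ᶠ κ, ((c : ℝ) ^ ((κ-μ)/2)) • D κ := by
    intro c hc
    have h1c : (0:ℝ) < 1 + c := by linarith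
    have e1 : ρ (lSL2 ((1+c) * s)) y = ρ (lSL2 (c*s)) (ρ (lSL2 s) y) := by
      rw [← Module.End.mul_apply, ← map_mul, lSL2_mul]
      congr 2
      ring
    have e2 : ρ (lSL2 (c*s)) (ρ (lSL2 s) y) = ∑ᶠ κ, ρ (lSL2 (c*s)) (C κ) := by
      conv_lhs => rw [← hcp_sum (ρ (lSL2 s) y)]
      exact lmap_finsum _ _ hCfin
    have hsubf : Function.support (fun κ => ρ (lSL2 (c*s)) (C κ)) ⊆ Function.support C := by
      intro κ hκ
      simp only [Function.mem_support] at hκ ⊢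
      intro h0; apply hκ; rw [h0, map_zero]
    have e3 : cp (ρ (lSL2 ((1+c)*s)) y) μ = ∑ᶠ κ, cp (ρ (lSL2 (c*s)) (C κ)) μ := by
      rw [e1, e2, cp_finsum ρ cp hcp_mem hcp_fin hcp_sum _ (hCfin.subset hsubf)]
    have e4 : cp (ρ (lSL2 ((1+c)*s)) y) μ = (((1+c):ℝ) ^ ((lam-μ)/2)) • C μ :=
      cp_l_scale ρ cp hcp_mem hcp_fin hcp_sum y lam hy s (1+c) μ h1c
    have e5 : ∀ κ, cp (ρ (lSL2 (c*s)) (C κ)) μ = ((c:ℝ) ^ ((κ-μ)/2)) • D κ := by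
      intro κ
      exact cp_l_scale ρ cp hcp_mem hcp_fin hcp_sum (C κ) κ
        (fun t => hcp_mem (ρ (lSL2 s) y) κ t) s c μ hc
    rw [← e4, e3]
    exact finsum_congr e5
  have hφ : ∃ φ : Module.Dual ℝ V, φ (C μ) ≠ 0 := by
    by_contra hall
    push_neg at hall
    exact hC ((Module.forall_dual_apply_eq_zero_iff ℝ (C μ)).mp hall)
  obtain ⟨φ, hφ⟩ := hφ
  apply no_power_combo hCfin.toFinset (fun κ => (κ - μ)/2) (fun κ => φ (D κ))
    (fun a _ b _ hab => by dsimp only at hab; linarith) (φ (C μ)) ((lam-μ)/2) hφ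
    (by linarith)
  intro c hc
  have h6 := congrArg φ (key c hc)
  rw [map_smul] at h6
  have hsupφ : Function.support (fun κ => ((c:ℝ) ^ ((κ-μ)/2)) • D κ) ⊆ Function.support C := by
    intro κ hκ
    simp only [Function.mem_support] at hκ
    apply hDsub
    simp only [Function.mem_support]
    intro h0; apply hκ; rw [h0, smul_zero]
  rw [lmap_finsum φ _ (hCfin.subset hsupφ)] at h6
  have h7 : ∀ κ, φ (((c:ℝ) ^ ((κ-μ)/2)) • D κ) = φ (D κ) * c ^ ((κ-μ)/2) := by
    intro κ
    rw [map_smul, smul_eq_mul, mul_comm]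
  rw [finsum_congr h7] at h6
  have h8 : (∑ᶠ κ, φ (D κ) * c ^ ((κ-μ)/2))
      = ∑ κ ∈ hCfin.toFinset, φ (D κ) * c ^ ((κ-μ)/2) := by
    apply finsum_eq_finset_sum_of_support_subset
    intro κ hκ
    simp only [Function.mem_support] at hκ
    rw [Set.Finite.coe_toFinset]
    apply hDsub
    simp only [Function.mem_support]
    intro h0; apply hκ; rw [h0, map_zero, zero_mul]
  rw [h8, smul_eq_mul,
    mul_comm (((1+c):ℝ) ^ ((lam-μ)/2)) (φ (C μ))] at h6
  exact h6

lemma cp_l (x : V) (s μ : ℝ) (hμ : cp (ρ (lSL2 s) x) μ ≠ 0) :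
    ∃ κ, cp x κ ≠ 0 ∧ μ ≤ κ := by
  by_contra hc
  push_neg at hc
  apply hμ
  have hsubf : Function.support (fun κ => ρ (lSL2 s) (cp x κ)) ⊆ Function.support (cp x) := by
    intro κ hκ
    simp only [Function.mem_support] at hκ ⊢
    intro h0; apply hκ; rw [h0, map_zero]
  have hx : ρ (lSL2 s) x = ∑ᶠ κ, ρ (lSL2 s) (cp x κ) := by
    conv_lhs => rw [← hcp_sum x]
    exact lmap_finsum _ _ (hcp_fin x)
  rw [hx, cp_finsum ρ cp hcp_mem hcp_fin hcp_sum _ ((hcp_fin x).subset hsubf) μ]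
  apply finsum_eq_zero_of_forall_eq_zero
  intro κ
  by_cases h0 : cp x κ = 0
  · rw [h0, map_zero, cp_zero ρ cp hcp_mem hcp_fin hcp_sum]
  · exact cp_l_eigen_eq_zero ρ cp hcp_mem hcp_fin hcp_sum (cp x κ) κ
      (fun t => hcp_mem x κ t) s μ (hc κ h0)

end Rep

theorem lambda_max_of_unipotent_translate
    {V : Type} [AddCommGroup V] [Module ℝ V] [FiniteDimensional ℝ V]
    (ρ : Matrix.SpecialLinearGroup (Fin 2) ℝ →* (V →ₗ[ℝ] V))
    -- `cp v λ` is the component `v_λ` of `v` in the `D`-eigenspace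
    -- `V_λ = {w : ρ(exp(tD)) w = e^{λt} w for all t}`:
    (cp : V → ℝ → V)
    (hcp_mem : ∀ (v : V) (lam t : ℝ),
      ρ (dTorus t) (cp v lam) = Real.exp (lam * t) • cp v lam)
    (hcp_fin : ∀ v : V, (Function.support (cp v)).Finite)
    (hcp_sum : ∀ v : V, (∑ᶠ lam, cp v lam) = v)
    (hcp_proj : ∀ (v : V) (lam : ℝ),
      (∀ t : ℝ, ρ (dTorus t) v = Real.exp (lam * t) • v) → cp v lam = v)
    (v : V) (hv : v ≠ 0) (r : ℝ) (hr : r ≠ 0) :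
    -sSup {lam : ℝ | cp v lam ≠ 0} ≤ sSup {lam : ℝ | cp (ρ (uSL2 r) v) lam ≠ 0} := by
  have hCfin : ∀ x : V, {lam : ℝ | cp x lam ≠ 0}.Finite := fun x => hcp_fin x
  have hne : ∀ x : V, x ≠ 0 → {lam : ℝ | cp x lam ≠ 0}.Nonempty := by
    intro x hx
    by_contra h
    rw [Set.not_nonempty_iff_eq_empty] at h
    apply hx
    rw [← hcp_sum x]
    apply finsum_eq_zero_of_forall_eq_zero
    intro κ
    by_contra h0
    have : κ ∈ {lam : ℝ | cp x lam ≠ 0} := h0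
    rw [h] at this
    exact this
  have hinj : ∀ (g : Matrix.SpecialLinearGroup (Fin 2) ℝ) (x : V), ρ g x = 0 → x = 0 := by
    intro g x h0
    have h1 : ρ g⁻¹ (ρ g x) = x := by
      rw [← Module.End.mul_apply, ← map_mul, inv_mul_cancel, map_one, Module.End.one_apply]
    rw [h0, map_zero] at h1
    exact h1.symm
  set x1 := ρ (lSL2 r⁻¹) v with hx1
  set x2 := ρ (wSL2 r hr) x1 with hx2
  have hx3 : ρ (uSL2 r) v = ρ (lSL2 r⁻¹) x2 := by
    rw [uSL2_eq r hr, map_mul, map_mul, Module.End.mul_apply, Module.End.mul_apply]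
  have hx1ne : x1 ≠ 0 := fun h => hv (hinj _ _ h)
  have hx2ne : x2 ≠ 0 := fun h => hx1ne (hinj _ _ h)
  have step1 : sSup {lam : ℝ | cp x1 lam ≠ 0} ≤ sSup {lam : ℝ | cp v lam ≠ 0} := by
    apply csSup_le (hne x1 hx1ne)
    intro κ hκ
    obtain ⟨κ', hκ'ne, hκκ'⟩ := cp_l ρ cp hcp_mem hcp_fin hcp_sum v r⁻¹ κ hκ
    exact le_trans hκκ' (le_csSup (hCfin v).bddAbove hκ'ne)
  set m := sInf {lam : ℝ | cp x1 lam ≠ 0} with hm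
  have hmmem : m ∈ {lam : ℝ | cp x1 lam ≠ 0} :=
    Set.Nonempty.csInf_mem (hne x1 hx1ne) (hCfin x1)
  have hmle : m ≤ sSup {lam : ℝ | cp x1 lam ≠ 0} := le_csSup (hCfin x1).bddAbove hmmem
  have hflip : cp x2 (-m) ≠ 0 := by
    rw [cp_w ρ cp hcp_mem hcp_fin hcp_sum r hr x1 (-m), neg_neg]
    intro h0
    exact hmmem (hinj _ _ h0)
  have step2 : -m ≤ sSup {lam : ℝ | cp x2 lam ≠ 0} := le_csSup (hCfin x2).bddAbove hflip
  have step3 : sSup {lam : ℝ | cp x2 lam ≠ 0}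
      ≤ sSup {lam : ℝ | cp (ρ (uSL2 r) v) lam ≠ 0} := by
    apply csSup_le (hne x2 hx2ne)
    intro κ hκ
    have hx2' : x2 = ρ (lSL2 (-r⁻¹)) (ρ (uSL2 r) v) := by
      rw [hx3, ← Module.End.mul_apply, ← map_mul, lSL2_mul, neg_add_cancel, lSL2_zero,
        map_one, Module.End.one_apply]
    rw [hx2'] at hκ
    obtain ⟨κ', hκ'ne, hκκ'⟩ := cp_l ρ cp hcp_mem hcp_fin hcp_sum (ρ (uSL2 r) v) (-r⁻¹) κ hκ
    exact le_trans hκκ' (le_csSup (hCfin _).bddAbove hκ'ne)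
  linarith [step1, step2, step3]

end
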